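/- arXiv:1909.00765 — 4 statements merged into one kernel-verified Lean document; each statement's English description precedes it below -/
import Mathlib

section
/- There is a constant C > 0 such that for all ζ ∈ ℂ with Re ζ > 0 and all natural numbers m < n, one has |∑_{j=m}^{n-1} 1/(ζ+j) − log((ζ+n)/(ζ+m))| ≤ C/|ζ+m|, where log is the principal branch. -/
open Filter Complex

lemma hml_div_re_pos {z w : ℂ} (him : z.im = w.im) (hz : 0 < z.re) (hw : 0 < w.re) :
    0 < (z / w).re := by
  rw [div_re]
  have h : 0 < normSq w := normSq_pos.2 (by intro h; rw [h] at hw; simp at hw)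
  rw [him]
  have h1 : 0 < z.re * w.re + w.im * w.im := by nlinarith
  have := div_pos h1 h
  calc (0:ℝ) < (z.re * w.re + w.im * w.im) / normSq w := this
    _ = z.re * w.re / normSq w + w.im * w.im / normSq w := by ring

lemma hml_pointwise {w : ℂ} (hw : 0 < w.re) :
    ‖w - Complex.log (1 + w)‖ ≤ 12 * min (‖w‖) (‖w‖ ^ 2) := by
  set t := ‖w‖ with ht
  have ht0 : 0 ≤ t := norm_nonneg w
  rcases le_or_gt t (1/2) with h | h
  · have hb := Complex.norm_log_one_add_sub_self_le (z := w) (by rw [← ht]; linarith)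
    rw [← ht] at hb
    have h2 : (1 - t)⁻¹ ≤ 2 := by
      rw [inv_le_comm₀ (by linarith) (by norm_num)]
      linarith
    have hle : ‖w - Complex.log (1 + w)‖ ≤ t ^ 2 := by
      rw [← norm_neg, neg_sub]
      calc ‖Complex.log (1 + w) - w‖ ≤ t ^ 2 * (1 - t)⁻¹ / 2 := hb
        _ ≤ t ^ 2 := by nlinarith [sq_nonneg t]
    have hmin : min t (t ^ 2) = t ^ 2 := min_eq_right (by nlinarith)
    rw [hmin]; nlinarith [norm_nonneg (w - Complex.log (1 + w))]
  · have h1w : 0 < (1 + w).re := by simp only [Complex.add_re, Complex.one_re]; linarith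
    have habs1w : (1:ℝ) ≤ ‖1 + w‖ :=
      le_trans (by simpa using hw.le) (Complex.re_le_norm (1 + w))
    have hlog : ‖Complex.log (1 + w)‖ ≤ t + Real.pi / 2 := by
      have hexpand : Complex.log (1 + w) = (Real.log (‖1 + w‖) : ℂ) + (Complex.arg (1 + w)) * Complex.I := by
        apply Complex.ext <;> simp [Complex.log_re, Complex.log_im]
      rw [hexpand]
      calc ‖_‖ ≤ ‖(Real.log (‖1 + w‖) : ℂ)‖ +
            ‖(Complex.arg (1 + w) : ℂ) * Complex.I‖ := norm_add_le _ _
        _ = |Real.log (‖1 + w‖)| + |Complex.arg (1 + w)| := by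
            simp [Complex.norm_real]
        _ ≤ t + Real.pi / 2 := by
            have harglt : |Complex.arg (1 + w)| < Real.pi / 2 :=
              Complex.abs_arg_lt_pi_div_two_iff.2 (Or.inl h1w)
            have hlogpos : 0 ≤ Real.log (‖1 + w‖) := Real.log_nonneg habs1w
            have hlogle : Real.log (‖1 + w‖) ≤ t := by
              have := Real.log_le_sub_one_of_pos (x := ‖1 + w‖) (by linarith)
              have hle : ‖1 + w‖ ≤ 1 + t := by
                simpa using norm_add_le 1 w
              linarith
            rw [_root_.abs_of_nonneg hlogpos]
            exact add_le_add hlogle harglt.le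
    have hpi : Real.pi ≤ 4 := Real.pi_le_four
    have hbound : ‖w - Complex.log (1 + w)‖ ≤ 2 * t + Real.pi / 2 := by
      have := norm_add_le w (-(Complex.log (1 + w)))
      rw [norm_neg] at this
      rw [sub_eq_add_neg]
      calc ‖w + -Complex.log (1 + w)‖ ≤ t + ‖Complex.log (1 + w)‖ := this
        _ ≤ 2 * t + Real.pi / 2 := by linarith
    have hminge : t / 2 ≤ min t (t ^ 2) := by
      rcases le_or_gt t 1 with h1 | h1
      · have he : min t (t ^ 2) = t ^ 2 := min_eq_right (by nlinarith)
        rw [he]; nlinarith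
      · have he : min t (t ^ 2) = t := min_eq_left (by nlinarith)
        rw [he]; linarith
    calc ‖w - Complex.log (1 + w)‖ ≤ 2 * t + Real.pi / 2 := hbound
      _ ≤ 12 * (t / 2) := by linarith
      _ ≤ 12 * min t (t ^ 2) := by linarith
lemma hml_ne_zero {z : ℂ} (hz : 0 < z.re) : z ≠ 0 := by
  intro h; rw [h] at hz; simp at hz

lemma hml_re_pos {ζ : ℂ} (hζ : 0 < ζ.re) (k : ℕ) : 0 < (ζ + (k:ℂ)).re := by
  simp only [Complex.add_re, Complex.natCast_re]
  positivity

lemma hml_im_eq (ζ : ℂ) (k : ℕ) : (ζ + (k:ℂ)).im = ζ.im := by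
  simp

lemma hml_telescope {ζ : ℂ} (hζ : 0 < ζ.re) (m : ℕ) :
    ∀ n, m ≤ n → Complex.log ((ζ + n) / (ζ + m)) =
      ∑ j ∈ Finset.Ico m n, Complex.log ((ζ + j + 1) / (ζ + j)) := by
  intro n hn
  induction n, hn using Nat.le_induction with
  | base => simp [div_self (hml_ne_zero (hml_re_pos hζ m))]
  | succ n hn ih =>
    rw [Finset.sum_Ico_succ_top hn, ← ih]
    have h1 : 0 < ((ζ + n) / (ζ + m)).re :=
      hml_div_re_pos (by simp) (hml_re_pos hζ n) (hml_re_pos hζ m)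
    have h2 : 0 < ((ζ + n + 1) / (ζ + n)).re := by
      have : (ζ + (n:ℂ) + 1) = ζ + ((n+1 : ℕ) : ℂ) := by push_cast; ring
      rw [this]
      exact hml_div_re_pos (by simp) (hml_re_pos hζ (n+1)) (hml_re_pos hζ n)
    have key : (ζ + ((n+1:ℕ):ℂ)) / (ζ + m) = ((ζ + n) / (ζ + m)) * ((ζ + n + 1) / (ζ + n)) := by
      have hn0 : (ζ + (n:ℂ)) ≠ 0 := hml_ne_zero (hml_re_pos hζ n)
      have hm0 : (ζ + (m:ℂ)) ≠ 0 := hml_ne_zero (hml_re_pos hζ m)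
      push_cast
      field_simp
      ring
    rw [key]
    have ha1 : |((ζ + n) / (ζ + m)).arg| < Real.pi / 2 :=
      Complex.abs_arg_lt_pi_div_two_iff.2 (Or.inl h1)
    have ha2 : |((ζ + n + 1) / (ζ + n)).arg| < Real.pi / 2 :=
      Complex.abs_arg_lt_pi_div_two_iff.2 (Or.inl h2)
    rw [abs_lt] at ha1 ha2
    exact Complex.log_mul (hml_ne_zero h1) (hml_ne_zero h2)
      ⟨by linarith [ha1.1, ha2.1], by linarith [ha1.2, ha2.2]⟩

/-- Uniform bound for partial harmonic sums against the principal logarithm. -/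
theorem harmonic_minus_log_bound :
    ∃ C : ℝ, 0 < C ∧ ∀ ζ : ℂ, 0 < ζ.re → ∀ m n : ℕ, m < n →
      ‖(∑ j ∈ Finset.Ico m n, 1 / (ζ + j)) -
          Complex.log ((ζ + n) / (ζ + m))‖ ≤ C / ‖ζ + m‖ := by
  refine ⟨60, by norm_num, ?_⟩
  intro ζ hζ m n hmn
  set a := ‖ζ + (m:ℂ)‖ with ha
  have ha0 : 0 < a := norm_pos_iff.mpr (hml_ne_zero (hml_re_pos hζ m))
  -- abs of ζ + j lower bounds
  have habs_ge_a : ∀ j : ℕ, m ≤ j → a ≤ ‖ζ + (j:ℂ)‖ := by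
    intro j hj
    have hb0 : 0 ≤ ‖ζ + (j:ℂ)‖ := norm_nonneg _
    have hsq : a ^ 2 ≤ ‖ζ + (j:ℂ)‖ ^ 2 := by
      rw [ha, Complex.sq_norm, Complex.sq_norm, Complex.normSq_apply, Complex.normSq_apply]
      simp only [Complex.add_re, Complex.add_im, Complex.natCast_re, Complex.natCast_im]
      have hj' : (m:ℝ) ≤ (j:ℝ) := by exact_mod_cast hj
      nlinarith [hζ]
    nlinarith
  have habs_ge_j : ∀ j : ℕ, (j:ℝ) ≤ ‖ζ + (j:ℂ)‖ := by
    intro j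
    calc (j:ℝ) ≤ (ζ + (j:ℂ)).re := by
          simp only [Complex.add_re, Complex.natCast_re]; linarith
      _ ≤ ‖ζ + (j:ℂ)‖ := Complex.re_le_norm _
  -- rewrite and split
  rw [hml_telescope hζ m n hmn.le, ← Finset.sum_sub_distrib]
  set B : ℕ → ℝ := fun j => 12 * min (1 / ‖ζ + (j:ℂ)‖) (1 / ‖ζ + (j:ℂ)‖ ^ 2)
    with hB
  have hterm : ∀ j ∈ Finset.Ico m n,
      ‖1 / (ζ + (j:ℂ)) - Complex.log ((ζ + j + 1) / (ζ + j))‖ ≤ B j := by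
    intro j _
    have hj0 : (ζ + (j:ℂ)) ≠ 0 := hml_ne_zero (hml_re_pos hζ j)
    have h1 : (ζ + (j:ℂ) + 1) / (ζ + j) = 1 + 1 / (ζ + j) := by field_simp
    rw [h1]
    have hwre : 0 < (1 / (ζ + (j:ℂ))).re := by
      rw [one_div, Complex.inv_re]
      exact div_pos (hml_re_pos hζ j) (Complex.normSq_pos.2 hj0)
    have hp := hml_pointwise hwre
    rw [hB]
    simp only [one_div] at hp ⊢
    simpa only [norm_inv, inv_pow] using hp
  have hBm : B m ≤ 12 / a := by
    rw [hB]
    have : min (1 / a) (1 / a ^ 2) ≤ 1 / a := min_le_left _ _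
    calc 12 * min (1/a) (1/a^2) ≤ 12 * (1/a) := by linarith
      _ = 12 / a := by ring
  have htail : ∑ j ∈ Finset.Ico (m+1) n, B j ≤ 48 / a := by
    rw [Finset.sum_Ico_eq_sum_range]
    set N := n - (m+1) with hN
    have hstep : ∀ i ∈ Finset.range N,
        B (m + 1 + i) ≤ 48 * (1 / (a + i) - 1 / (a + i + 1)) := by
      intro i _
      set b := ‖ζ + ((m+1+i : ℕ):ℂ)‖ with hb
      have hb1 : a ≤ b := habs_ge_a _ (by omega)
      have hb2 : (i:ℝ) + 1 ≤ b := by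
        have := habs_ge_j (m+1+i)
        have hc : ((m+1+i : ℕ):ℝ) = (m:ℝ) + 1 + i := by push_cast; ring
        rw [hc] at this
        have hm0 : (0:ℝ) ≤ (m:ℝ) := Nat.cast_nonneg m
        linarith
      have hb0 : 0 < b := lt_of_lt_of_le ha0 hb1
      have hi0 : (0:ℝ) ≤ (i:ℝ) := Nat.cast_nonneg i
      have hkey : 1 / b ^ 2 ≤ 4 / ((a + i) * (a + i + 1)) := by
        rw [div_le_div_iff₀ (by positivity) (by positivity)]
        nlinarith
      have hmin : min (1/b) (1/b^2) ≤ 1 / b ^ 2 := min_le_right _ _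
      have heq : (4:ℝ) / ((a + i) * (a + i + 1)) = 4 * (1 / (a + i) - 1 / (a + i + 1)) := by
        field_simp
        ring
      calc B (m + 1 + i) = 12 * min (1/b) (1/b^2) := by rw [hB]
        _ ≤ 12 * (1 / b ^ 2) := by linarith
        _ ≤ 12 * (4 / ((a + i) * (a + i + 1))) := by linarith
        _ = 48 * (1 / (a + i) - 1 / (a + i + 1)) := by rw [heq]; ring
    calc ∑ i ∈ Finset.range N, B (m + 1 + i)
        ≤ ∑ i ∈ Finset.range N, 48 * (1 / (a + i) - 1 / (a + i + 1)) :=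
          Finset.sum_le_sum hstep
      _ = 48 * ∑ i ∈ Finset.range N, ((fun k : ℕ => 1 / (a + k)) i - (fun k : ℕ => 1 / (a + k)) (i+1)) := by
          rw [Finset.mul_sum]
          refine Finset.sum_congr rfl fun i _ => ?_
          push_cast
          ring_nf
      _ = 48 * (1 / (a + (0:ℕ)) - 1 / (a + (N:ℕ))) := by rw [Finset.sum_range_sub']
      _ ≤ 48 / a := by
          have : (0:ℝ) ≤ 1 / (a + (N:ℕ)) := by positivity
          simp only [Nat.cast_zero, add_zero]
          rw [div_eq_mul_one_div 48 a]
          nlinarith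
  calc ‖∑ j ∈ Finset.Ico m n, (1 / (ζ + (j:ℂ)) - Complex.log ((ζ + j + 1) / (ζ + j)))‖
      ≤ ∑ j ∈ Finset.Ico m n, ‖1 / (ζ + (j:ℂ)) - Complex.log ((ζ + j + 1) / (ζ + j))‖ :=
        norm_sum_le _ _
    _ ≤ ∑ j ∈ Finset.Ico m n, B j := Finset.sum_le_sum hterm
    _ = B m + ∑ j ∈ Finset.Ico (m+1) n, B j := Finset.sum_eq_sum_Ico_succ_bot hmn _
    _ ≤ 12 / a + 48 / a := add_le_add hBm htail
    _ = 60 / a := by ring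
end

section
/- Let λ ∈ ℂ with |λ| = 1 and λ not a root of unity, let c ∈ ℂ* and let (x_n) be a sequence of complex numbers such that x_n / (λⁿ c) → 1 as n → ∞. Then the set of accumulation points of the sequence (x_n) equals the circle {z ∈ ℂ : |z| = |c|}. -/
open Filter Complex

lemma circle_exp_zsmul (n : ℤ) (t : ℝ) : Circle.exp (n • t) = Circle.exp t ^ n := by
  simpa using map_zsmul Circle.expHom n t

lemma dense_zpowers_circle (L : Circle) (hirr : ∀ k : ℕ, 0 < k → L ^ k ≠ 1) :
    Dense (Set.range fun n : ℤ => L ^ n) := by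
  set θ : ℝ := Complex.arg (L : ℂ) with hθ
  have hexpθ : Circle.exp θ = L := Circle.exp_arg L
  set S : AddSubgroup ℝ := AddSubgroup.closure {θ, 2 * Real.pi} with hS
  have hSdense : Dense (S : Set ℝ) := by
    rcases S.dense_or_cyclic with h | ⟨a, ha⟩
    · exact h
    · exfalso
      have hθS : θ ∈ S := AddSubgroup.subset_closure (by simp)
      have h2S : (2 * Real.pi) ∈ S := AddSubgroup.subset_closure (by simp)
      rw [ha] at hθS h2S
      obtain ⟨m, hm⟩ := AddSubgroup.mem_closure_singleton.1 hθS
      obtain ⟨n, hn⟩ := AddSubgroup.mem_closure_singleton.1 h2S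
      have hn0 : n ≠ 0 := by
        rintro rfl
        rw [zero_zsmul] at hn
        nlinarith [Real.pi_pos]
      have key : L ^ n = 1 := by
        rw [← hexpθ, ← circle_exp_zsmul]
        have h1 : n • θ = m • (2 * Real.pi) := by
          rw [← hm, ← hn, smul_comm]
        rw [h1, circle_exp_zsmul]
        simp
      have key2 : L ^ n.natAbs = 1 := by
        rcases Int.natAbs_eq n with h | h
        · rw [h, zpow_natCast] at key; exact key
        · rw [h, zpow_neg, zpow_natCast, inv_eq_one] at key; exact key
      exact hirr n.natAbs (Int.natAbs_pos.2 hn0) key2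
  have hsub : ∀ s ∈ S, ∃ n : ℤ, Circle.exp s = L ^ n := by
    intro s hs
    induction hs using AddSubgroup.closure_induction with
    | mem y hy =>
      rcases hy with rfl | rfl
      · exact ⟨1, by simpa using hexpθ⟩
      · exact ⟨0, by simp⟩
    | zero => exact ⟨0, by simp [Circle.exp_zero]⟩
    | add a b _ _ iha ihb =>
      obtain ⟨p, hp⟩ := iha
      obtain ⟨q, hq⟩ := ihb
      exact ⟨p + q, by rw [Circle.exp_add, hp, hq, zpow_add]⟩
    | neg a _ iha =>
      obtain ⟨p, hp⟩ := iha
      exact ⟨-p, by rw [Circle.exp_neg, hp, zpow_neg]⟩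
  have hsurj : Function.Surjective Circle.exp := fun z => ⟨Complex.arg (z : ℂ), Circle.exp_arg z⟩
  have himg : Dense (Circle.exp '' (S : Set ℝ)) :=
    hsurj.denseRange.dense_image Circle.exp.continuous hSdense
  refine himg.mono ?_
  rintro _ ⟨s, hs, rfl⟩
  obtain ⟨n, hn⟩ := hsub s hs
  exact ⟨n, hn.symm⟩

/-- If `x_n/(λⁿc) → 1` with `λ` an irrational rotation and `c ≠ 0`, then the
accumulation points of `(x_n)` form the circle of radius `|c|`. -/
theorem accumulation_points_asymptotic_rotation (lam c : ℂ)
    (hlam : ‖lam‖ = 1) (hirr : ∀ k : ℕ, 0 < k → lam ^ k ≠ 1)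
    (hc : c ≠ 0) (x : ℕ → ℂ)
    (hx : Tendsto (fun n => x n / (lam ^ n * c)) atTop (nhds 1)) :
    {z : ℂ | ∃ φ : ℕ → ℕ, StrictMono φ ∧ Tendsto (fun k => x (φ k)) atTop (nhds z)}
      = {z : ℂ | ‖z‖ = ‖c‖} := by
  have hlam0 : lam ≠ 0 := by
    intro h; rw [h] at hlam; simp at hlam
  have habsx : Tendsto (fun n => ‖x n‖) atTop (nhds ‖c‖) := by
    have h1 := ((continuous_norm.tendsto 1).comp hx).mul_const ‖c‖
    simp only [Function.comp_def, norm_one, one_mul] at h1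
    have h2 : ∀ n, ‖x n / (lam ^ n * c)‖ * ‖c‖ = ‖x n‖ := by
      intro n
      rw [norm_div, norm_mul, norm_pow, hlam, one_pow, one_mul, div_mul_cancel₀]
      exact norm_ne_zero_iff.2 hc
    simp only [h2] at h1
    exact h1
  ext z
  simp only [Set.mem_setOf_eq]
  constructor
  · rintro ⟨φ, hφ, hz⟩
    have h1 : Tendsto (fun k => ‖x (φ k)‖) atTop (nhds ‖c‖) :=
      habsx.comp hφ.tendsto_atTop
    have h2 : Tendsto (fun k => ‖x (φ k)‖) atTop (nhds ‖z‖) :=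
      (continuous_norm.tendsto z).comp hz
    exact tendsto_nhds_unique h2 h1
  · intro hz
    set w : ℂ := z / c with hw
    have habsw : ‖w‖ = 1 := by
      rw [hw, norm_div, hz, div_self (norm_ne_zero_iff.2 hc)]
    set L : Circle := ⟨lam, mem_sphere_zero_iff_norm.2 hlam⟩ with hL
    set W : Circle := ⟨w, mem_sphere_zero_iff_norm.2 habsw⟩ with hW
    have hcoepow : ∀ n : ℕ, ((L ^ n : Circle) : ℂ) = lam ^ n := by
      intro n
      exact map_pow Circle.coeHom L n
    have hirr' : ∀ k : ℕ, 0 < k → L ^ k ≠ 1 := by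
      intro k hk hEq
      apply hirr k hk
      have := congrArg (fun z : Circle => (z : ℂ)) hEq
      simpa [hcoepow k] using this
    have hdense := dense_zpowers_circle L hirr'
    have hclz : W ∈ closure (Set.range fun n : ℤ => L ^ n) := hdense W
    have hcl : W ∈ closure (Set.range fun n : ℕ => L ^ n) := by
      rwa [closure_range_zpow_eq_pow] at hclz
    have hmcp : MapClusterPt W atTop (fun n : ℕ => L ^ n) :=
      ((mapClusterPt_atTop_pow_tfae W L).out 0 2).2 hcl
    obtain ⟨φ, hφ, hlim⟩ := TopologicalSpace.FirstCountableTopology.tendsto_subseq hmcp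
    refine ⟨φ, hφ, ?_⟩
    have hlimC : Tendsto (fun k => (lam ^ φ k : ℂ)) atTop (nhds w) := by
      have h3 := (continuous_subtype_val.tendsto W).comp hlim
      exact h3
    have hq : Tendsto (fun k => x (φ k) / (lam ^ φ k * c)) atTop (nhds 1) :=
      hx.comp hφ.tendsto_atTop
    have hmul : Tendsto (fun k => (x (φ k) / (lam ^ φ k * c)) * (lam ^ φ k * c))
        atTop (nhds (1 * (w * c))) := hq.mul (hlimC.mul_const c)
    have heq : ∀ k, (x (φ k) / (lam ^ φ k * c)) * (lam ^ φ k * c) = x (φ k) := by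
      intro k
      exact div_mul_cancel₀ _ (mul_ne_zero (pow_ne_zero _ hlam0) hc)
    have hwz : 1 * (w * c) = z := by
      rw [one_mul, hw, div_mul_cancel₀ _ hc]
    rw [← hwz]
    simpa [heq] using hmul
end

section
/- Let X be a set, F : X → X a bijection, B ⊆ X with F(B) ⊆ B, Ω = ∪_{n∈ℕ} F^{-n}(B). Let ψ : Ω → ℂ satisfy ψ ∘ F = ψ + 1 on Ω, let λ ∈ S¹, and let τ : B → ℂ* satisfy τ ∘ F = λ̄ τ, with the pair (ψ|_B, τ) injective on B (i.e. (ψ(p),τ(p)) = (ψ(q),τ(q)) implies p = q for p,q ∈ B). Define Φ : Ω → ℂ × ℂ* by Φ(p) = (ψ(p), λⁿτ(Fⁿ(p))) for any n with Fⁿ(p) ∈ B. Then Φ is injective on Ω. -/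
open Complex

/-- The map `Φ(p) = (ψ(p), λⁿ τ(Fⁿ(p)))` is injective on `Ω = ⋃ₙ F⁻ⁿ(B)`. -/
theorem extended_coordinates_injective {X : Type*} (F : X → X)
    (hF : Function.Bijective F) (B : Set X) (hB : Set.MapsTo F B B)
    (lam : ℂ) (hlam : ‖lam‖ = 1)
    (ψ τ : X → ℂ) (hτ0 : ∀ p ∈ B, τ p ≠ 0)
    (hψ : ∀ p : X, (∃ n : ℕ, F^[n] p ∈ B) → ψ (F p) = ψ p + 1)
    (hτ : ∀ p ∈ B, τ (F p) = lam⁻¹ * τ p)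
    (hinj : ∀ p ∈ B, ∀ q ∈ B, ψ p = ψ q → τ p = τ q → p = q)
    (Φ : X → ℂ × ℂ)
    (hΦ : ∀ (p : X) (n : ℕ), F^[n] p ∈ B → Φ p = (ψ p, lam ^ n * τ (F^[n] p))) :
    ∀ p q : X, (∃ n : ℕ, F^[n] p ∈ B) → (∃ n : ℕ, F^[n] q ∈ B) →
      Φ p = Φ q → p = q := by
  have hBiter : ∀ k : ℕ, ∀ x ∈ B, F^[k] x ∈ B := by
    intro k
    induction k with
    | zero => simp
    | succ k ih =>
      intro x hx
      rw [Function.iterate_succ_apply]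
      exact ih _ (hB hx)
  have hup : ∀ (x : X) (j k : ℕ), j ≤ k → F^[j] x ∈ B → F^[k] x ∈ B := by
    intro x j k hjk hj
    have := hBiter (k - j) _ hj
    rwa [← Function.iterate_add_apply, Nat.sub_add_cancel hjk] at this
  have hΩ : ∀ (x : X), (∃ j : ℕ, F^[j] x ∈ B) → ∀ k : ℕ,
      ∃ j : ℕ, F^[j] (F^[k] x) ∈ B := by
    intro x ⟨j, hj⟩ k
    refine ⟨max j k - k, ?_⟩
    rw [← Function.iterate_add_apply, Nat.sub_add_cancel (le_max_right j k)]
    exact hup x j _ (le_max_left j k) hj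
  have hψiter : ∀ (k : ℕ) (x : X), (∃ j : ℕ, F^[j] x ∈ B) →
      ψ (F^[k] x) = ψ x + k := by
    intro k
    induction k with
    | zero => simp
    | succ k ih =>
      intro x hx
      rw [Function.iterate_succ_apply', hψ _ (hΩ x hx k), ih x hx]
      push_cast
      ring
  intro p q ⟨n, hn⟩ ⟨m, hm⟩ hpq
  set N := max n m with hN
  have hpN : F^[N] p ∈ B := hup p n N (le_max_left n m) hn
  have hqN : F^[N] q ∈ B := hup q m N (le_max_right n m) hm
  rw [hΦ p N hpN, hΦ q N hqN, Prod.mk.injEq] at hpq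
  have hlam0 : lam ≠ 0 := by
    intro h; rw [h] at hlam; simp at hlam
  have hτeq : τ (F^[N] p) = τ (F^[N] q) :=
    mul_left_cancel₀ (pow_ne_zero N hlam0) hpq.2
  have hψeq : ψ (F^[N] p) = ψ (F^[N] q) := by
    rw [hψiter N p ⟨n, hn⟩, hψiter N q ⟨m, hm⟩, hpq.1]
  have := hinj _ hpN _ hqN hψeq hτeq
  exact Function.Injective.iterate hF.injective N this
end

section
/- Let Ω be a set, F : Ω → Ω, λ ∈ S¹, and suppose ψ : Ω → ℂ satisfies ψ ∘ F = ψ + 1 with Re ψ > 0 everywhere, and σ : Ω → ℂ* satisfies σ ∘ F = λ̄·e^{−1/(2ψ)}·σ. For n ∈ ℕ define τ_n : Ω → ℂ* by τ_n = √(ψ+n)·exp(−½ ∑_{j=0}^{n-1} 1/(ψ+j))·σ, using the principal square root. Then τ_n ∘ F = λ̄·τ_{n+1} for all n ∈ ℕ. -/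
open Complex

/-- The maps `τ_n = √(ψ+n)·exp(−½ ∑_{j<n} 1/(ψ+j))·σ` satisfy
`τ_n ∘ F = λ⁻¹ τ_{n+1}`. -/
theorem tau_n_functional_equation {Ω : Type*} (F : Ω → Ω) (lam : ℂ)
    (hlam : ‖lam‖ = 1) (ψ σ : Ω → ℂ)
    (hψre : ∀ p, 0 < (ψ p).re)
    (hψ : ∀ p, ψ (F p) = ψ p + 1)
    (hσ0 : ∀ p, σ p ≠ 0)
    (hσ : ∀ p, σ (F p) = lam⁻¹ * Complex.exp (-(1 / (2 * ψ p))) * σ p)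
    (τ : ℕ → Ω → ℂ)
    (hτ : ∀ (n : ℕ) (p : Ω), τ n p = (ψ p + n) ^ (1 / 2 : ℂ) *
        Complex.exp (-(1 / 2) * ∑ j ∈ Finset.range n, 1 / (ψ p + j)) * σ p) :
    ∀ (n : ℕ) (p : Ω), τ n (F p) = lam⁻¹ * τ (n + 1) p := by
  intro n p
  rw [hτ, hτ, hσ, hψ]
  have hbase : (ψ p + 1 + (n : ℂ)) = ψ p + ((n : ℕ) + 1 : ℕ) := by push_cast; ring
  have hsum : (∑ j ∈ Finset.range (n + 1), 1 / (ψ p + j)) =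
      (∑ j ∈ Finset.range n, 1 / (ψ p + 1 + j)) + 1 / ψ p := by
    rw [Finset.sum_range_succ']
    congr 1
    · apply Finset.sum_congr rfl
      intro j _
      push_cast
      ring_nf
    · simp
  rw [hbase, hsum]
  have hexp : Complex.exp (-(1 / 2) * ((∑ j ∈ Finset.range n, 1 / (ψ p + 1 + j)) + 1 / ψ p))
      = Complex.exp (-(1 / 2) * ∑ j ∈ Finset.range n, 1 / (ψ p + 1 + j)) *
        Complex.exp (-(1 / (2 * ψ p))) := by
    rw [← Complex.exp_add]
    congr 1
    ring
  rw [hexp]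
  ring
end
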